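/- Let C and C' be two (α,γ)-clusterings of X with d(C,C') > 0. Then d(C,C') ≥ α·(γ−1)² / (2γ² − γ + 1). -/

import Mathlib

open Finset
open scoped symmDiff

/-- `P(A)`: the probability mass of a finite set `A`. -/
noncomputable def pOf {X : Type*} (P : X → ℝ) (A : Finset X) : ℝ := ∑ x ∈ A, P x

/-- `Δ(x,A)`: the average distance from `x` to `A`,
weighted by the probability mass function `P` restricted to `A`. -/
noncomputable def Dpt {X : Type*} [MetricSpace X] (P : X → ℝ) (x : X) (A : Finset X) : ℝ :=
  (∑ y ∈ A, P y * dist x y) / pOf P A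

/-- `{C_1,…,C_k}` is an `(α,γ)`-clustering: a partition of `X` into nonempty parts, each of
probability at least `α`, such that `Δ(x,C_j) ≥ γ·Δ(x,C_i)` for all `i ≠ j` and `x ∈ C_i`. -/
def IsGoodClustering {X : Type*} [Fintype X] [MetricSpace X] (P : X → ℝ) (α γ : ℝ)
    {k : ℕ} (C : Fin k → Finset X) : Prop :=
  (∀ i, (C i).Nonempty) ∧
  (∀ i j, i ≠ j → Disjoint (C i) (C j)) ∧
  (∀ x : X, ∃ i, x ∈ C i) ∧
  (∀ i, α ≤ pOf P (C i)) ∧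
  (∀ i j, i ≠ j → ∀ x ∈ C i, γ * Dpt P x (C i) ≤ Dpt P x (C j))

/-- The symmetric-difference distance between two (equal-length) collections of subsets of `X`:
the minimum over permutations `σ` of `P(∪ᵢ (Cᵢ ⊕ C'_{σ(i)}))`. -/
noncomputable def dColl {X : Type*} [DecidableEq X] (P : X → ℝ) {k : ℕ}
    (C C' : Fin k → Finset X) : ℝ :=
  Finset.univ.inf' ⟨Equiv.refl _, Finset.mem_univ _⟩ (fun σ : Equiv.Perm (Fin k) =>
    pOf P (Finset.univ.biUnion fun i => (C i) ∆ (C' (σ i))))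

/-- Pad a collection of `k` sets with empty sets to obtain a collection of `K ≥ k` sets. -/
def pad {X : Type*} {k K : ℕ} (h : k ≤ K) (C : Fin k → Finset X) : Fin K → Finset X :=
  fun i => if h' : (i : ℕ) < k then C ⟨i, h'⟩ else ∅

set_option linter.unusedSectionVars false
set_option linter.unusedVariables false

section Helpers

variable {X : Type*} [MetricSpace X] [DecidableEq X]

lemma pOf_nonneg (P : X → ℝ) (hP : ∀ x, 0 < P x) (A : Finset X) : 0 ≤ pOf P A :=
  Finset.sum_nonneg fun x _ => (hP x).le

lemma pOf_mono (P : X → ℝ) (hP : ∀ x, 0 < P x) {A B : Finset X} (h : A ⊆ B) :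
    pOf P A ≤ pOf P B :=
  Finset.sum_le_sum_of_subset_of_nonneg h fun x _ _ => (hP x).le

lemma pOf_pos (P : X → ℝ) (hP : ∀ x, 0 < P x) {A : Finset X} (hA : A.Nonempty) :
    0 < pOf P A :=
  Finset.sum_pos (fun x _ => hP x) hA

lemma nonempty_of_pOf_pos (P : X → ℝ) {A : Finset X} (h : 0 < pOf P A) : A.Nonempty := by
  by_contra hc
  rw [Finset.not_nonempty_iff_eq_empty] at hc
  simp [pOf, hc] at h

lemma fsum_nonneg (P : X → ℝ) (hP : ∀ x, 0 < P x) (x : X) (A : Finset X) :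
    0 ≤ ∑ y ∈ A, P y * dist x y :=
  Finset.sum_nonneg fun y _ => mul_nonneg (hP y).le dist_nonneg

lemma Dpt_nonneg (P : X → ℝ) (hP : ∀ x, 0 < P x) (x : X) (A : Finset X) :
    0 ≤ Dpt P x A :=
  div_nonneg (fsum_nonneg P hP x A) (pOf_nonneg P hP A)

lemma tri (P : X → ℝ) (hP : ∀ x, 0 < P x) {S : Finset X} (hS : S.Nonempty) (x y : X) :
    dist x y ≤ Dpt P x S + Dpt P y S := by
  have hp : 0 < pOf P S := pOf_pos P hP hS
  rw [Dpt, Dpt, ← add_div, le_div_iff₀ hp]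
  have : dist x y * pOf P S = ∑ z ∈ S, P z * dist x y := by
    rw [pOf, Finset.mul_sum]; exact Finset.sum_congr rfl fun z _ => by ring
  rw [this]
  have h2 : (∑ z ∈ S, P z * dist x y) ≤ ∑ z ∈ S, P z * (dist x z + dist z y) := by
    apply Finset.sum_le_sum
    intro z _
    exact mul_le_mul_of_nonneg_left (dist_triangle x z y) (hP z).le
  refine h2.trans (le_of_eq ?_)
  rw [← Finset.sum_add_distrib]
  exact Finset.sum_congr rfl fun z _ => by rw [dist_comm z y]; ring

lemma key_step (P : X → ℝ) (hP : ∀ x, 0 < P x) (α γ ε M : ℝ)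
    (hα : 0 < α) (hγ0 : 0 ≤ γ) (hε0 : 0 ≤ ε) (hεα : ε < α)
    (Di Dj Si Sj : Finset X)
    (hSiDi : Si ⊆ Di) (hSjDj : Sj ⊆ Dj)
    (hDiB : pOf P (Di \ Si) ≤ ε) (hDjB : pOf P (Dj \ Sj) ≤ ε)
    (hDiα : α ≤ pOf P Di) (hDjα : α ≤ pOf P Dj)
    (x : X) (hgood : γ * Dpt P x Di ≤ Dpt P x Dj)
    (hM : ∑ y ∈ Dj \ Sj, P y * Dpt P y Sj ≤ M) :
    γ * (1 - ε / α) * Dpt P x Si ≤ Dpt P x Sj + (ε * Dpt P x Sj + M) / α := by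
  have hpDi : 0 < pOf P Di := lt_of_lt_of_le hα hDiα
  have hpDj : 0 < pOf P Dj := lt_of_lt_of_le hα hDjα
  have hsplit_i : pOf P (Di \ Si) + pOf P Si = pOf P Di := Finset.sum_sdiff hSiDi
  have hsplit_j : pOf P (Dj \ Sj) + pOf P Sj = pOf P Dj := Finset.sum_sdiff hSjDj
  have hR0i : 0 ≤ pOf P (Di \ Si) := pOf_nonneg P hP _
  have hR0j : 0 ≤ pOf P (Dj \ Sj) := pOf_nonneg P hP _
  have hpSi : 0 < pOf P Si := by linarith
  have hpSj : 0 < pOf P Sj := by linarith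
  have hSine : Si.Nonempty := nonempty_of_pOf_pos P hpSi
  have hSjne : Sj.Nonempty := nonempty_of_pOf_pos P hpSj
  have hfSi0 : 0 ≤ ∑ y ∈ Si, P y * dist x y := fsum_nonneg P hP x Si
  have hfSj0 : 0 ≤ ∑ y ∈ Sj, P y * dist x y := fsum_nonneg P hP x Sj
  have hfR0 : 0 ≤ ∑ y ∈ Dj \ Sj, P y * dist x y := fsum_nonneg P hP x (Dj \ Sj)
  have hfSile : (∑ y ∈ Si, P y * dist x y) ≤ ∑ y ∈ Di, P y * dist x y :=
    Finset.sum_le_sum_of_subset_of_nonneg hSiDi fun y _ _ => mul_nonneg (hP y).le dist_nonneg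
  have hsplitf : (∑ y ∈ Dj \ Sj, P y * dist x y) + ∑ y ∈ Sj, P y * dist x y
      = ∑ y ∈ Dj, P y * dist x y := Finset.sum_sdiff hSjDj
  -- Step A : (1 - ε/α) * Dpt x Si ≤ Dpt x Di
  have hratio : pOf P Di * (1 - ε / α) ≤ pOf P Si := by
    have h1 : ε ≤ pOf P Di * (ε / α) := by
      rw [mul_div_assoc', le_div_iff₀ hα]
      nlinarith
    nlinarith
  have stepA : (1 - ε / α) * Dpt P x Si ≤ Dpt P x Di := by
    have hnum : (1 - ε / α) * (∑ y ∈ Si, P y * dist x y) * pOf P Di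
        ≤ (∑ y ∈ Di, P y * dist x y) * pOf P Si := by
      nlinarith [mul_le_mul_of_nonneg_left hratio hfSi0]
    have heq : (1 - ε / α) * Dpt P x Si = ((1 - ε / α) * ∑ y ∈ Si, P y * dist x y) / pOf P Si := by
      rw [Dpt, mul_div_assoc]
    rw [heq, Dpt, div_le_div_iff₀ hpSi hpDi]
    linarith [hnum]
  -- Step B : Dpt x Dj ≤ Dpt x Sj + fR / α
  have stepB : Dpt P x Dj ≤ Dpt P x Sj + (∑ y ∈ Dj \ Sj, P y * dist x y) / α := by
    have hpSjDj : pOf P Sj ≤ pOf P Dj := by linarith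
    have b1 : (∑ y ∈ Sj, P y * dist x y) / pOf P Dj
        ≤ (∑ y ∈ Sj, P y * dist x y) / pOf P Sj := by
      rw [div_le_div_iff₀ hpDj hpSj]
      nlinarith [mul_le_mul_of_nonneg_left hpSjDj hfSj0]
    have b2 : (∑ y ∈ Dj \ Sj, P y * dist x y) / pOf P Dj
        ≤ (∑ y ∈ Dj \ Sj, P y * dist x y) / α := by
      rw [div_le_div_iff₀ hpDj hα]
      nlinarith [mul_le_mul_of_nonneg_left hDjα hfR0]
    rw [Dpt, Dpt, ← hsplitf, add_div]
    linarith
  -- Step C : fR ≤ ε * Dpt x Sj + M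
  have stepC : (∑ y ∈ Dj \ Sj, P y * dist x y) ≤ ε * Dpt P x Sj + M := by
    have h1 : (∑ y ∈ Dj \ Sj, P y * dist x y)
        ≤ ∑ y ∈ Dj \ Sj, P y * (Dpt P x Sj + Dpt P y Sj) := by
      apply Finset.sum_le_sum
      intro y _
      exact mul_le_mul_of_nonneg_left (tri P hP hSjne x y) (hP y).le
    have h2 : ∑ y ∈ Dj \ Sj, P y * (Dpt P x Sj + Dpt P y Sj)
        = pOf P (Dj \ Sj) * Dpt P x Sj + ∑ y ∈ Dj \ Sj, P y * Dpt P y Sj := by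
      rw [pOf, Finset.sum_mul, ← Finset.sum_add_distrib]
      exact Finset.sum_congr rfl fun y _ => by ring
    have h3 : pOf P (Dj \ Sj) * Dpt P x Sj ≤ ε * Dpt P x Sj :=
      mul_le_mul_of_nonneg_right hDjB (Dpt_nonneg P hP x Sj)
    calc (∑ y ∈ Dj \ Sj, P y * dist x y) ≤ _ := h1
      _ = _ := h2
      _ ≤ ε * Dpt P x Sj + M := by linarith
  -- combine
  have c1 : γ * ((1 - ε / α) * Dpt P x Si) ≤ γ * Dpt P x Di :=
    mul_le_mul_of_nonneg_left stepA hγ0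
  have c2 : (∑ y ∈ Dj \ Sj, P y * dist x y) / α ≤ (ε * Dpt P x Sj + M) / α := by
    gcongr
  calc γ * (1 - ε / α) * Dpt P x Si = γ * ((1 - ε / α) * Dpt P x Si) := by ring
    _ ≤ γ * Dpt P x Di := c1
    _ ≤ Dpt P x Dj := hgood
    _ ≤ Dpt P x Sj + (∑ y ∈ Dj \ Sj, P y * dist x y) / α := stepB
    _ ≤ Dpt P x Sj + (ε * Dpt P x Sj + M) / α := by linarith

end Helpers

lemma core {X : Type*} [Fintype X] [MetricSpace X] [DecidableEq X]
    (P : X → ℝ) (hP : ∀ x, 0 < P x)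
    (α γ : ℝ) (hα : 0 < α) (hγ : 1 < γ)
    {K : ℕ} (D D' : Fin K → Finset X)
    (hD : IsGoodClustering P α γ D) (hD' : IsGoodClustering P α γ D')
    (hlt : pOf P (univ.biUnion fun i => D i ∆ D' i) < α)
    (hpos : 0 < pOf P (univ.biUnion fun i => D i ∆ D' i)) :
    α * (γ - 1) / (γ + 2) ≤ pOf P (univ.biUnion fun i => D i ∆ D' i) := by
  obtain ⟨hDne, hDdisj, hDcov, hDα, hDgood⟩ := hD
  obtain ⟨hD'ne, hD'disj, hD'cov, hD'α, hD'good⟩ := hD'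
  set B : Finset X := univ.biUnion fun i => D i ∆ D' i with hB
  set ε : ℝ := pOf P B with hε
  have hε0 : 0 ≤ ε := hpos.le
  -- labels
  choose ix hix using hDcov
  choose jx hjx using hD'cov
  have huniq : ∀ y i, y ∈ D i → ix y = i := by
    intro y i h
    by_contra hne
    exact (Finset.disjoint_left.mp (hDdisj _ _ hne) (hix y)) h
  have huniq' : ∀ y i, y ∈ D' i → jx y = i := by
    intro y i h
    by_contra hne
    exact (Finset.disjoint_left.mp (hD'disj _ _ hne) (hjx y)) h
  -- membership in B
  have hBmem : ∀ x ∈ B, ix x ≠ jx x := by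
    intro x hx
    rw [hB, Finset.mem_biUnion] at hx
    obtain ⟨i₀, -, hx⟩ := hx
    rw [Finset.mem_symmDiff] at hx
    rcases hx with ⟨h1, h2⟩ | ⟨h1, h2⟩
    · rw [huniq x i₀ h1]
      intro hc
      exact h2 (hc ▸ hjx x)
    · rw [huniq' x i₀ h1]
      intro hc
      exact h2 (hc ▸ hix x)
  -- the cores
  set S : Fin K → Finset X := fun i => D i ∩ D' i with hS
  have hSD : ∀ i, S i ⊆ D i := fun i => Finset.inter_subset_left
  have hSD' : ∀ i, S i ⊆ D' i := fun i => Finset.inter_subset_right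
  have hDSB : ∀ i, D i \ S i ⊆ B := by
    intro i y hy
    rw [Finset.mem_sdiff, hS] at hy
    simp only [Finset.mem_inter, not_and] at hy
    rw [hB, Finset.mem_biUnion]
    exact ⟨i, Finset.mem_univ i, Finset.mem_symmDiff.mpr (Or.inl ⟨hy.1, hy.2 hy.1⟩)⟩
  have hD'SB : ∀ i, D' i \ S i ⊆ B := by
    intro i y hy
    rw [Finset.mem_sdiff, hS] at hy
    simp only [Finset.mem_inter, not_and] at hy
    rw [hB, Finset.mem_biUnion]
    refine ⟨i, Finset.mem_univ i, Finset.mem_symmDiff.mpr (Or.inr ⟨hy.1, ?_⟩)⟩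
    intro hc
    exact hy.2 hc hy.1
  have hDSε : ∀ i, pOf P (D i \ S i) ≤ ε := fun i => pOf_mono P hP (hDSB i)
  have hD'Sε : ∀ i, pOf P (D' i \ S i) ≤ ε := fun i => pOf_mono P hP (hD'SB i)
  -- m and m'
  set m : X → ℝ := fun x => Dpt P x (S (ix x)) with hm
  set m' : X → ℝ := fun x => Dpt P x (S (jx x)) with hm'
  set M : ℝ := ∑ y ∈ B, P y * m y with hM
  set M' : ℝ := ∑ y ∈ B, P y * m' y with hM'
  -- per-point inequality
  have hkey : ∀ x ∈ B, γ * (1 - ε / α) * (m x + m' x)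
      ≤ (m x + m' x) + (ε * (m x + m' x) + (M + M')) / α := by
    intro x hx
    have hij : ix x ≠ jx x := hBmem x hx
    -- first application : clusters D (ix x) and D (jx x)
    have hMle : ∑ y ∈ D (jx x) \ S (jx x), P y * Dpt P y (S (jx x)) ≤ M := by
      have he : ∀ y ∈ D (jx x) \ S (jx x), P y * Dpt P y (S (jx x)) = P y * m y := by
        intro y hy
        simp only [hm]
        rw [huniq y (jx x) (Finset.mem_sdiff.mp hy).1]
      rw [Finset.sum_congr rfl he]
      apply Finset.sum_le_sum_of_subset_of_nonneg (hDSB (jx x))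
      intro y _ _
      exact mul_nonneg (hP y).le (Dpt_nonneg P hP y _)
    have h1 : γ * (1 - ε / α) * m x ≤ m' x + (ε * m' x + M) / α := by
      rw [hm, hm']
      exact key_step P hP α γ ε M hα (by linarith) hε0 hlt
        (D (ix x)) (D (jx x)) (S (ix x)) (S (jx x))
        (hSD _) (hSD _) (hDSε _) (hDSε _) (hDα _) (hDα _) x
        (hDgood (ix x) (jx x) hij x (hix x)) hMle
    -- second application : clusters D' (jx x) and D' (ix x)
    have hM'le : ∑ y ∈ D' (ix x) \ S (ix x), P y * Dpt P y (S (ix x)) ≤ M' := by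
      have he : ∀ y ∈ D' (ix x) \ S (ix x), P y * Dpt P y (S (ix x)) = P y * m' y := by
        intro y hy
        simp only [hm']
        rw [huniq' y (ix x) (Finset.mem_sdiff.mp hy).1]
      rw [Finset.sum_congr rfl he]
      apply Finset.sum_le_sum_of_subset_of_nonneg (hD'SB (ix x))
      intro y _ _
      exact mul_nonneg (hP y).le (Dpt_nonneg P hP y _)
    have h2 : γ * (1 - ε / α) * m' x ≤ m x + (ε * m x + M') / α := by
      rw [hm, hm']
      exact key_step P hP α γ ε M' hα (by linarith) hε0 hlt
        (D' (jx x)) (D' (ix x)) (S (jx x)) (S (ix x))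
        (hSD' _) (hSD' _) (hD'Sε _) (hD'Sε _) (hD'α _) (hD'α _) x
        (hD'good (jx x) (ix x) (Ne.symm hij) x (hjx x)) hM'le
    have hdiv : (ε * m' x + M) / α + (ε * m x + M') / α
        = (ε * (m x + m' x) + (M + M')) / α := by
      rw [← add_div]
      ring_nf
    linarith
  -- summation
  have hsum : ∑ x ∈ B, P x * (γ * (1 - ε / α) * (m x + m' x))
      ≤ ∑ x ∈ B, P x * ((m x + m' x) + (ε * (m x + m' x) + (M + M')) / α) :=
    Finset.sum_le_sum fun x hx => mul_le_mul_of_nonneg_left (hkey x hx) (hP x).le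
  set W : ℝ := M + M' with hW
  have hWsum : ∑ x ∈ B, P x * (m x + m' x) = W := by
    rw [hW, hM, hM', ← Finset.sum_add_distrib]
    exact Finset.sum_congr rfl fun x _ => by ring
  have hLHS : ∑ x ∈ B, P x * (γ * (1 - ε / α) * (m x + m' x))
      = γ * (1 - ε / α) * W := by
    rw [← hWsum, Finset.mul_sum]
    exact Finset.sum_congr rfl fun x _ => by ring
  have hRHS : ∑ x ∈ B, P x * ((m x + m' x) + (ε * (m x + m' x) + (M + M')) / α)
      = (1 + ε / α) * W + (W / α) * ε := by
    have : ∀ x, P x * ((m x + m' x) + (ε * (m x + m' x) + (M + M')) / α)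
        = (1 + ε / α) * (P x * (m x + m' x)) + ((M + M') / α) * P x := by
      intro x
      field_simp
      all_goals ring
    rw [Finset.sum_congr rfl fun x _ => this x, Finset.sum_add_distrib,
      ← Finset.mul_sum, ← Finset.mul_sum, hWsum]
    have hPB : ∑ x ∈ B, P x = ε := rfl
    rw [hPB, hW]
  rw [hLHS, hRHS] at hsum
  -- positivity of W
  have hBne : B.Nonempty := nonempty_of_pOf_pos P hpos
  obtain ⟨x₀, hx₀⟩ := hBne
  have hSne : ∀ i, (S i).Nonempty := by
    intro i
    apply nonempty_of_pOf_pos P (A := S i)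
    have h1 : pOf P (D i \ S i) + pOf P (S i) = pOf P (D i) := Finset.sum_sdiff (hSD i)
    have h2 := hDSε i
    have h3 := hDα i
    linarith
  have hx₀S : x₀ ∉ S (ix x₀) := by
    intro hc
    exact hBmem x₀ hx₀ (((huniq' x₀ (ix x₀) ((hSD' _) hc))).symm)
  have hmpos : 0 < m x₀ := by
    rw [hm]
    apply div_pos
    · apply Finset.sum_pos
      · intro y hy
        refine mul_pos (hP y) (dist_pos.mpr ?_)
        intro hc
        exact hx₀S (hc ▸ hy)
      · exact hSne _
    · exact pOf_pos P hP (hSne _)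
  have hWpos : 0 < W := by
    rw [← hWsum]
    have hterm : ∀ x ∈ B, 0 ≤ P x * (m x + m' x) := by
      intro x _
      exact mul_nonneg (hP x).le (add_nonneg (Dpt_nonneg P hP x _) (Dpt_nonneg P hP x _))
    have h0 : 0 < P x₀ * (m x₀ + m' x₀) :=
      mul_pos (hP x₀) (by have := Dpt_nonneg P hP x₀ (S (jx x₀)); rw [hm'] ; linarith)
    calc (0:ℝ) < P x₀ * (m x₀ + m' x₀) := h0
      _ ≤ ∑ x ∈ B, P x * (m x + m' x) := Finset.single_le_sum hterm hx₀
  -- conclude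
  have hsum' : γ * (1 - ε / α) * W ≤ (1 + ε / α) * W + (ε / α) * W := by
    have hre : W / α * ε = ε / α * W := by ring
    linarith [hre ▸ hsum]
  have hfinal : γ * (1 - ε / α) ≤ 1 + 2 * (ε / α) := by
    nlinarith [hsum', hWpos]
  rw [div_le_iff₀ (by linarith : (0:ℝ) < γ + 2)]
  have hd : ε / α * α = ε := div_mul_cancel₀ ε hα.ne'
  have hd2 : γ * (ε / α * α) = γ * ε := by rw [hd]
  nlinarith [mul_le_mul_of_nonneg_right hfinal hα.le, hd, hd2, hγ]

lemma good_reindex {X : Type*} [Fintype X] [MetricSpace X] (P : X → ℝ) (α γ : ℝ)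
    {k K : ℕ} (C : Fin k → Finset X) (e : Fin K ≃ Fin k)
    (h : IsGoodClustering P α γ C) : IsGoodClustering P α γ (fun i => C (e i)) := by
  obtain ⟨h1, h2, h3, h4, h5⟩ := h
  refine ⟨fun i => h1 _, fun i j hij => h2 _ _ (fun hc => hij (e.injective hc)), ?_,
    fun i => h4 _, fun i j hij x hx => h5 _ _ (fun hc => hij (e.injective hc)) x hx⟩
  intro x
  obtain ⟨j, hj⟩ := h3 x
  exact ⟨e.symm j, by simpa using hj⟩

lemma pad_full {X : Type*} {k K : ℕ} (hkK : k ≤ K) (hKk : K ≤ k) (C : Fin k → Finset X) :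
    pad hkK C = fun i => C (Fin.cast (le_antisymm hKk hkK) i) := by
  funext i
  rw [pad, dif_pos (lt_of_lt_of_le i.isLt hKk)]
  rfl

lemma denom_pos {γ : ℝ} (hγ : 1 < γ) : 0 < 2 * γ ^ 2 - γ + 1 := by nlinarith

lemma target_le_alpha {α γ : ℝ} (hα : 0 < α) (hγ : 1 < γ) :
    α * (γ - 1) ^ 2 / (2 * γ ^ 2 - γ + 1) ≤ α := by
  rw [div_le_iff₀ (denom_pos hγ)]
  nlinarith

lemma target_le_simple {α γ ε : ℝ} (hα : 0 < α) (hγ : 1 < γ)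
    (h : α * (γ - 1) / (γ + 2) ≤ ε) :
    α * (γ - 1) ^ 2 / (2 * γ ^ 2 - γ + 1) ≤ ε := by
  refine le_trans ?_ h
  rw [div_le_div_iff₀ (denom_pos hγ) (by linarith : (0:ℝ) < γ + 2)]
  have h1 : 0 ≤ α * (γ - 1) * (γ - 1) ^ 2 :=
    mul_nonneg (mul_nonneg hα.le (by linarith)) (sq_nonneg _)
  have h2 : 0 ≤ α * (γ - 1) := mul_nonneg hα.le (by linarith)
  nlinarith [h1, h2]

/-- Two distinct `(α,γ)`-clusterings differ substantially: if `d(C,C') > 0` then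
`d(C,C') ≥ α(γ−1)²/(2γ²−γ+1)`. (The shorter collection is padded with empty sets.) -/
theorem stmt_5 {X : Type*} [Fintype X] [MetricSpace X] [DecidableEq X]
    (P : X → ℝ) (hP : ∀ x, 0 < P x) (hsum : ∑ x, P x = 1)
    (α γ : ℝ) (hα : 0 < α) (hγ : 1 < γ)
    {k k' : ℕ} (C : Fin k → Finset X) (C' : Fin k' → Finset X)
    (hC : IsGoodClustering P α γ C) (hC' : IsGoodClustering P α γ C')
    (hpos : 0 < dColl P (pad (le_max_left k k') C) (pad (le_max_right k k') C')) :
    α * (γ - 1) ^ 2 / (2 * γ ^ 2 - γ + 1) ≤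
      dColl P (pad (le_max_left k k') C) (pad (le_max_right k k') C') := by
  rcases Nat.lt_trichotomy k k' with hkk | hkk | hkk
  · -- k < k' : every permutation pairs an empty padded C-set with a real C'-cluster
    refine le_trans (target_le_alpha hα hγ) ?_
    apply Finset.le_inf'
    intro σ _
    have hkmax : k < max k k' := lt_of_lt_of_le hkk (le_max_right k k')
    set i₀ : Fin (max k k') := ⟨k, hkmax⟩ with hi₀
    have hCempt : pad (le_max_left k k') C i₀ = ∅ := by
      rw [pad, dif_neg (lt_irrefl k)]
    have hσlt : ((σ i₀ : Fin (max k k')) : ℕ) < k' := by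
      exact lt_of_lt_of_le (σ i₀).isLt (max_le hkk.le le_rfl)
    have hC'eq : pad (le_max_right k k') C' (σ i₀) = C' ⟨σ i₀, hσlt⟩ := by
      rw [pad, dif_pos hσlt]
    have hsub : C' ⟨σ i₀, hσlt⟩ ⊆
        univ.biUnion fun i => pad (le_max_left k k') C i ∆ pad (le_max_right k k') C' (σ i) := by
      refine le_trans ?_ (Finset.subset_biUnion_of_mem _ (Finset.mem_univ i₀))
      rw [hCempt, hC'eq, ← Finset.bot_eq_empty, bot_symmDiff]
    exact le_trans (hC'.2.2.2.1 _) (pOf_mono P hP hsub)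
  · -- k = k'
    subst hkk
    have hmax : max k k = k := Nat.max_self k
    have hDgood : IsGoodClustering P α γ (pad (le_max_left k k) C) := by
      rw [pad_full (le_max_left k k) hmax.le]
      exact good_reindex P α γ C (finCongr (le_antisymm hmax.le (le_max_left k k))) hC
    have hD'good : IsGoodClustering P α γ (pad (le_max_right k k) C') := by
      rw [pad_full (le_max_right k k) hmax.le]
      exact good_reindex P α γ C' (finCongr (le_antisymm hmax.le (le_max_right k k))) hC'
    obtain ⟨σ₀, -, hval⟩ := Finset.exists_mem_eq_inf' (α := ℝ)
      (⟨Equiv.refl _, Finset.mem_univ _⟩ :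
        (Finset.univ : Finset (Equiv.Perm (Fin (max k k)))).Nonempty)
      (fun σ : Equiv.Perm (Fin (max k k)) =>
        pOf P (Finset.univ.biUnion fun i =>
          (pad (le_max_left k k) C i) ∆ (pad (le_max_right k k) C' (σ i))))
    have hεd : dColl P (pad (le_max_left k k) C) (pad (le_max_right k k) C')
        = pOf P (Finset.univ.biUnion fun i =>
          (pad (le_max_left k k) C i) ∆ (pad (le_max_right k k) C' (σ₀ i))) := hval
    have hεpos : 0 < pOf P (Finset.univ.biUnion fun i =>
        (pad (le_max_left k k) C i) ∆ (pad (le_max_right k k) C' (σ₀ i))) := by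
      rw [← hεd]; exact hpos
    have hσgood : IsGoodClustering P α γ (fun i => pad (le_max_right k k) C' (σ₀ i)) :=
      good_reindex P α γ (pad (le_max_right k k) C') σ₀ hD'good
    rw [hεd]
    rcases le_or_gt α (pOf P (Finset.univ.biUnion fun i =>
        (pad (le_max_left k k) C i) ∆ (pad (le_max_right k k) C' (σ₀ i)))) with hcase | hcase
    · exact le_trans (target_le_alpha hα hγ) hcase
    · exact target_le_simple hα hγ
        (core P hP α γ hα hγ (pad (le_max_left k k) C)
          (fun i => pad (le_max_right k k) C' (σ₀ i)) hDgood hσgood hcase hεpos)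
  · -- k' < k
    refine le_trans (target_le_alpha hα hγ) ?_
    apply Finset.le_inf'
    intro σ _
    have hkmax : k' < max k k' := lt_of_lt_of_le hkk (le_max_left k k')
    set j₀ : Fin (max k k') := ⟨k', hkmax⟩ with hj₀
    set i₀ : Fin (max k k') := σ.symm j₀ with hi₀
    have hC'empt : pad (le_max_right k k') C' (σ i₀) = ∅ := by
      rw [hi₀, Equiv.apply_symm_apply, pad, dif_neg (lt_irrefl k')]
    have hσlt : ((i₀ : Fin (max k k')) : ℕ) < k := by
      exact lt_of_lt_of_le i₀.isLt (max_le le_rfl hkk.le)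
    have hCeq : pad (le_max_left k k') C i₀ = C ⟨i₀, hσlt⟩ := by
      rw [pad, dif_pos hσlt]
    have hsub : C ⟨i₀, hσlt⟩ ⊆
        univ.biUnion fun i => pad (le_max_left k k') C i ∆ pad (le_max_right k k') C' (σ i) := by
      refine le_trans ?_ (Finset.subset_biUnion_of_mem _ (Finset.mem_univ i₀))
      rw [hCeq, hC'empt, ← Finset.bot_eq_empty, symmDiff_bot]
    exact le_trans (hC.2.2.2.1 _) (pOf_mono P hP hsub)
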